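/- Let c : ℕ → ℝ be a sequence of coefficients with c_0 = 0 such that the power series ∑_{j≥1} c_j t^j has positive radius of convergence R, and let f(t) = exp(∑_{j=1}^∞ c_j t^j) for |t| < R. Let x be a real number and k a positive integer. For each nonempty finite set S of positive integers and each real r > 1, define P_f(S, r, x) = ∏_{n=|S|}^∞ [ f( (∏_{j∈S} (r^j − 1)^{1/j}) · x / r^n ) ]^{binom(n−1, |S|−1)}. Then, as r tends to 1 from the right, the quotient [ ∏_{S : max S = k, |S| odd} P_f(S, r, x) ] / [ ∏_{S : max S = k, |S| even} P_f(S, r, x) ] tends to exp(c_k · x^k), where both outer products range over the (finitely many) subsets S of {1, …, k} containing k of the indicated parity of cardinality. -/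

import Mathlib

open Filter Topology

/-- For a finite set `S` of positive integers and `r, x : ℝ`, `gmpP f S r x` is
`∏_{n=|S|}^∞ f ((∏_{j ∈ S} (r^j − 1)^(1/j)) * x / r^n) ^ (binom (n−1) (|S|−1))`,
where the index over `n ≥ |S|` is parametrized by `n = m + |S|`, `m : ℕ`. -/
noncomputable def gmpP (f : ℝ → ℝ) (S : Finset ℕ) (r x : ℝ) : ℝ :=
  ∏' m : ℕ,
    (f ((∏ j ∈ S, (r ^ j - 1) ^ ((1 : ℝ) / j)) * x / r ^ (m + S.card)))
      ^ ((m + S.card - 1).choose (S.card - 1))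



lemma abs_summable_of_radius {c : ℕ → ℝ} {R : ℝ} (hR : 0 < R)
    (hsum : ∀ t : ℝ, |t| < R → Summable fun j : ℕ => c j * t ^ j)
    {t : ℝ} (ht : |t| < R) : Summable fun j : ℕ => |c j| * |t| ^ j := by
  set t2 : ℝ := (|t| + R) / 2 with ht2
  have h0t : (0:ℝ) ≤ |t| := abs_nonneg t
  have h1 : |t| < t2 := by rw [ht2]; linarith
  have h2 : t2 < R := by rw [ht2]; linarith
  have ht2pos : 0 < t2 := lt_of_le_of_lt h0t h1
  have hs2 : Summable fun j : ℕ => c j * t2 ^ j := hsum t2 (by rwa [abs_of_pos ht2pos])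
  obtain ⟨M, hM⟩ : ∃ M : ℝ, ∀ j : ℕ, |c j * t2 ^ j| ≤ M := by
    obtain ⟨M, hM⟩ := (hs2.tendsto_atTop_zero.norm).bddAbove_range
    exact ⟨M, fun j => hM ⟨j, rfl⟩⟩
  have hτ : |t| / t2 < 1 := (div_lt_one ht2pos).2 h1
  have hτ0 : 0 ≤ |t| / t2 := by positivity
  refine Summable.of_nonneg_of_le (fun j => by positivity) (fun j => ?_)
    (((summable_geometric_of_lt_one hτ0 hτ)).mul_left M)
  have : |c j| * |t| ^ j = |c j * t2 ^ j| * (|t| / t2) ^ j := by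
    rw [abs_mul, abs_pow, abs_of_pos ht2pos, mul_assoc, ← mul_pow, mul_div_assoc',
      mul_div_cancel_left₀ _ ht2pos.ne']
  rw [this]
  exact mul_le_mul_of_nonneg_right (hM j) (by positivity)

lemma alt_sum (k : ℕ) (hk : 0 < k) (w : ℕ → ℝ) :
    ∑ S ∈ (Finset.Icc 1 k).powerset.filter (fun S => k ∈ S),
      (if Even S.card then (-1:ℝ) else 1) * ∏ i ∈ S, w i
      = w k * ∏ i ∈ Finset.Icc 1 (k-1), (1 - w i) := by
  classical
  have hexp : ∏ i ∈ Finset.Icc 1 (k-1), (1 - w i)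
      = ∑ T ∈ (Finset.Icc 1 (k-1)).powerset, (-1:ℝ) ^ T.card * ∏ i ∈ T, w i := by
    have := Finset.prod_add (fun i => (-w i)) (fun _ => (1:ℝ)) (Finset.Icc 1 (k-1))
    simp only [Finset.prod_const_one, mul_one] at this
    calc ∏ i ∈ Finset.Icc 1 (k-1), (1 - w i)
        = ∏ i ∈ Finset.Icc 1 (k-1), (-w i + 1) := by
          apply Finset.prod_congr rfl; intros; ring
      _ = ∑ T ∈ (Finset.Icc 1 (k-1)).powerset, ∏ i ∈ T, (-w i) := this
      _ = _ := by
          apply Finset.sum_congr rfl; intro T _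
          rw [show (∏ i ∈ T, -w i) = ∏ i ∈ T, (-1) * w i by simp,
            Finset.prod_mul_distrib, Finset.prod_const]
  rw [hexp, Finset.mul_sum]
  have hknot : k ∉ Finset.Icc 1 (k-1) := by
    simp only [Finset.mem_Icc]; omega
  refine Finset.sum_nbij' (fun S => S.erase k) (fun T => insert k T) ?_ ?_ ?_ ?_ ?_
  · intro S hS
    simp only [Finset.mem_filter, Finset.mem_powerset] at hS
    simp only [Finset.mem_powerset]
    intro i hi
    have h1 := Finset.mem_of_mem_erase hi
    have h2 := Finset.ne_of_mem_erase hi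
    have := hS.1 h1
    simp only [Finset.mem_Icc] at this ⊢
    omega
  · intro T hT
    simp only [Finset.mem_powerset] at hT
    simp only [Finset.mem_filter, Finset.mem_powerset]
    refine ⟨?_, Finset.mem_insert_self k T⟩
    intro i hi
    rcases Finset.mem_insert.1 hi with rfl | h
    · simp only [Finset.mem_Icc]; omega
    · have := hT h
      simp only [Finset.mem_Icc] at this ⊢
      omega
  · intro S hS
    simp only [Finset.mem_filter] at hS
    exact Finset.insert_erase hS.2
  · intro T hT
    simp only [Finset.mem_powerset] at hT
    exact Finset.erase_insert (fun hkT => hknot (hT hkT))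
  · intro S hS
    simp only [Finset.mem_filter] at hS
    have hkS : k ∈ S := hS.2
    have hcard : (S.erase k).card = S.card - 1 := Finset.card_erase_of_mem hkS
    have hpos : 0 < S.card := Finset.card_pos.2 ⟨k, hkS⟩
    have hprod : ∏ i ∈ S, w i = w k * ∏ i ∈ S.erase k, w i :=
      (Finset.mul_prod_erase S w hkS).symm
    rw [hprod, hcard]
    rcases Nat.even_or_odd S.card with he | ho
    · have : Odd (S.card - 1) := by
        rcases he with ⟨m, hm⟩; exact ⟨m-1, by omega⟩
      rw [if_pos he, this.neg_one_pow]
      ring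
    · have : Even (S.card - 1) := by
        rcases ho with ⟨m, hm⟩; exact ⟨m, by omega⟩
      rw [if_neg (Nat.not_even_iff_odd.2 ho), this.neg_one_pow]
      ring


lemma gmpP_eq {c : ℕ → ℝ} (hc0 : c 0 = 0) {R : ℝ} (hR : 0 < R)
    (hsum : ∀ t : ℝ, |t| < R → Summable fun j : ℕ => c j * t ^ j)
    {f : ℝ → ℝ} (hf : ∀ t : ℝ, |t| < R → f t = Real.exp (∑' j : ℕ, c j * t ^ j))
    (x : ℝ) {r : ℝ} (hr : 1 < r) {S : Finset ℕ} (hSne : S.Nonempty)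
    (hA : |(∏ i ∈ S, (r ^ i - 1) ^ ((1 : ℝ) / i)) * x| < R) :
    gmpP f S r x
      = Real.exp (∑' j : ℕ,
          c j * ((∏ i ∈ S, (r ^ i - 1) ^ ((1 : ℝ) / i)) * x) ^ j / (r ^ j - 1) ^ S.card) := by
  classical
  set s := S.card with hs
  have hs1 : 1 ≤ s := Finset.card_pos.2 hSne
  set A : ℝ := (∏ i ∈ S, (r ^ i - 1) ^ ((1 : ℝ) / i)) * x with hAdef
  have hr0 : (0:ℝ) < r := lt_trans one_pos hr
  have hrinv : |r⁻¹| < 1 := by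
    rw [abs_of_pos (inv_pos.2 hr0)]
    exact inv_lt_one_of_one_lt₀ hr
  set t : ℕ → ℝ := fun m => A / r ^ (m + s) with htdef
  have ht : ∀ m, t m = A * (r⁻¹) ^ (m + s) := by
    intro m; show A / r ^ (m + s) = _; rw [div_eq_mul_inv, inv_pow]
  have htR : ∀ m, |t m| < R := by
    intro m
    show |A / r ^ (m + s)| < R
    have h1 : (1:ℝ) ≤ r ^ (m + s) := one_le_pow₀ hr.le
    rw [abs_div, abs_of_pos (lt_of_lt_of_le one_pos h1)]
    calc |A| / r ^ (m + s) ≤ |A| := div_le_self (abs_nonneg A) h1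
      _ < R := hA
  set F : ℕ → ℕ → ℝ := fun m j => (((m + s - 1).choose (s - 1) : ℕ) : ℝ) * (c j * t m ^ j)
    with hFdef
  have hchoose : ∀ m, (m + s - 1).choose (s - 1) = (m + (s-1)).choose (s-1) := by
    intro m; congr 1; omega
  have ha : Summable fun m : ℕ => (((m + (s-1)).choose (s-1) : ℕ) : ℝ) * (r⁻¹) ^ m := by
    exact summable_choose_mul_geometric_of_norm_lt_one (R := ℝ) (s-1) (r := r⁻¹)
      (by rwa [Real.norm_eq_abs])
  have hb : Summable fun j : ℕ => |c j| * |A| ^ j := abs_summable_of_radius hR hsum hA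
  have hFsum : Summable (Function.uncurry F) := by
    apply Summable.of_norm_bounded (g := fun p : ℕ × ℕ => ((((p.1 + (s-1)).choose (s-1) : ℕ) : ℝ) * (r⁻¹) ^ p.1)
        * (|c p.2| * |A| ^ p.2))
      (ha.mul_of_nonneg hb (fun m => by positivity) (fun j => by positivity))
    rintro ⟨m, j⟩
    simp only [Function.uncurry, hFdef, Real.norm_eq_abs]
    rcases Nat.eq_zero_or_pos j with rfl | hj
    · rw [hc0]
      simp only [zero_mul, mul_zero, abs_zero]
      positivity
    · rw [abs_mul, abs_mul, Nat.abs_cast, abs_pow, hchoose]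
      have h1 : |t m| ^ j ≤ |A| ^ j * r⁻¹ ^ m := by
        rw [ht m, abs_mul, mul_pow, abs_pow, abs_of_pos (inv_pos.2 hr0)]
        apply mul_le_mul_of_nonneg_left _ (by positivity)
        rw [← pow_mul]
        apply pow_le_pow_of_le_one (by positivity) (inv_le_one_of_one_le₀ hr.le)
        calc m ≤ m * j := Nat.le_mul_of_pos_right m hj
          _ ≤ (m + s) * j := by apply Nat.mul_le_mul_right; omega
      calc ((((m + (s-1)).choose (s-1) : ℕ) : ℝ)) * (|c j| * |t m| ^ j)
          ≤ ((((m + (s-1)).choose (s-1) : ℕ) : ℝ)) * (|c j| * (|A| ^ j * r⁻¹ ^ m)) := by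
            apply mul_le_mul_of_nonneg_left _ (by positivity)
            exact mul_le_mul_of_nonneg_left h1 (abs_nonneg _)
        _ = (((m + (s-1)).choose (s-1) : ℕ) : ℝ) * r⁻¹ ^ m * (|c j| * |A| ^ j) := by ring
  have hinner : ∀ j : ℕ, HasSum (fun m => F m j) (c j * A ^ j / (r ^ j - 1) ^ s) := by
    intro j
    rcases Nat.eq_zero_or_pos j with rfl | hj
    · have h0 : (fun m => F m 0) = fun _ => (0:ℝ) := by
        funext m; show (((m + s - 1).choose (s - 1) : ℕ) : ℝ) * (c 0 * t m ^ 0) = 0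
        rw [hc0]; ring
      rw [h0, hc0]
      simpa using hasSum_zero
    · have hzlt : ‖(r⁻¹) ^ j‖ < 1 := by
        rw [norm_pow]
        apply pow_lt_one₀ (norm_nonneg _) (by rwa [Real.norm_eq_abs]) (by omega)
      have hgeo := hasSum_choose_mul_geometric_of_norm_lt_one (𝕜 := ℝ) (s-1) hzlt
      have hgeo2 := hgeo.mul_left (c j * A ^ j * ((r⁻¹) ^ j) ^ s)
      have hrj1 : (0:ℝ) < r ^ j - 1 := by
        have : (1:ℝ) < r ^ j := one_lt_pow₀ hr (by omega)
        linarith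
      have hkey : (1 - (r⁻¹) ^ j) = (r ^ j - 1) * (r⁻¹) ^ j := by
        rw [inv_pow]
        field_simp
      have hss : s - 1 + 1 = s := by omega
      rw [hss] at hgeo2
      have hval : c j * A ^ j * (r⁻¹ ^ j) ^ s * (1 / (1 - r⁻¹ ^ j) ^ s)
          = c j * A ^ j / (r ^ j - 1) ^ s := by
        rw [hkey, mul_pow]
        have h2 : ((r⁻¹ ^ j) ^ s : ℝ) ≠ 0 := by positivity
        have h3 : ((r ^ j - 1) ^ s : ℝ) ≠ 0 := by positivity
        have h4 : (r⁻¹ ^ j) ^ s * ((r⁻¹ ^ j) ^ s)⁻¹ = 1 := mul_inv_cancel₀ h2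
        rw [one_div, mul_pow (r ^ j - 1), mul_inv, div_eq_mul_inv]
        linear_combination (c j * ((∏ i ∈ S, (r ^ i - 1) ^ ((1 : ℝ) / i)) ^ j * x ^ j)
          * ((r ^ j - 1) ^ s)⁻¹) * h4
      have hfun : (fun m : ℕ => c j * A ^ j * ((r⁻¹) ^ j) ^ s
            * ((((m + (s-1)).choose (s-1) : ℕ) : ℝ) * ((r⁻¹) ^ j) ^ m)) = fun m => F m j := by
        funext m
        have hpow : (A * r⁻¹ ^ (m+s))^j = A^j * (((r⁻¹)^j)^s * ((r⁻¹)^j)^m) := by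
          rw [mul_pow, ← pow_mul, ← pow_mul, ← pow_mul, ← pow_add]
          congr 1
          ring
        show _ = (((m + s - 1).choose (s - 1) : ℕ) : ℝ) * (c j * t m ^ j)
        rw [hchoose, ht m, hpow]
        ring
      rw [← hval, ← hfun]
      exact hgeo2
  have hfac : ∀ m : ℕ,
      (f (A / r ^ (m + s))) ^ ((m + s - 1).choose (s - 1))
        = Real.exp (∑' j : ℕ, F m j) := by
    intro m
    have h1 : f (t m) = Real.exp (∑' j : ℕ, c j * t m ^ j) := hf (t m) (htR m)
    have h2 : ∑' j : ℕ, F m j = (((m + s - 1).choose (s - 1) : ℕ) : ℝ)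
        * ∑' j : ℕ, c j * t m ^ j := tsum_mul_left
    rw [show A / r ^ (m + s) = t m from rfl, h1, h2, ← Real.exp_nat_mul]
  have hsumF : Summable (fun m => ∑' j : ℕ, F m j) := by
    have := hFsum.prod
    simpa [Function.uncurry] using this
  have hProd : HasProd (fun m => Real.exp (∑' j : ℕ, F m j))
      (Real.exp (∑' m : ℕ, ∑' j : ℕ, F m j)) := hsumF.hasSum.rexp
  have hgm : gmpP f S r x = Real.exp (∑' m : ℕ, ∑' j : ℕ, F m j) := by
    rw [gmpP]
    rw [show (∏' m : ℕ, (f ((∏ i ∈ S, (r ^ i - 1) ^ ((1 : ℝ) / i)) * x / r ^ (m + S.card)))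
        ^ ((m + S.card - 1).choose (S.card - 1)))
      = ∏' m : ℕ, Real.exp (∑' j : ℕ, F m j) from tprod_congr (fun m => hfac m)]
    exact hProd.tprod_eq
  rw [hgm]
  congr 1
  rw [(Summable.tsum_comm hFsum).symm]
  exact tsum_congr fun j => (hinner j).tsum_eq

lemma pow_sub_one_le_aux {r : ℝ} (hr : 1 < r) (hr2 : r ≤ 2) {i k : ℕ} (hik : i ≤ k) :
    r ^ i - 1 ≤ ((k : ℝ) * 2 ^ k) * (r - 1) := by
  have h1 : (∑ t ∈ Finset.range i, r ^ t) * (r - 1) = r ^ i - 1 := geom_sum_mul r i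
  rw [← h1]
  apply mul_le_mul_of_nonneg_right _ (by linarith)
  calc ∑ t ∈ Finset.range i, r ^ t ≤ ∑ t ∈ Finset.range i, (2:ℝ) ^ k := by
        apply Finset.sum_le_sum
        intro t ht
        calc r ^ t ≤ 2 ^ t := pow_le_pow_left₀ (by linarith) hr2 t
          _ ≤ 2 ^ k := pow_le_pow_right₀ (by norm_num) (by
              have := Finset.mem_range.1 ht; omega)
    _ = (i : ℝ) * 2 ^ k := by rw [Finset.sum_const, Finset.card_range, nsmul_eq_mul]
    _ ≤ (k : ℝ) * 2 ^ k := by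
        apply mul_le_mul_of_nonneg_right _ (by positivity)
        exact_mod_cast hik

lemma mul_sub_one_le_pow_sub_one {r : ℝ} (hr : 1 < r) (j : ℕ) :
    (j : ℝ) * (r - 1) ≤ r ^ j - 1 := by
  have := one_add_mul_le_pow (a := r - 1) (by linarith) j
  rw [show 1 + (r - 1) = r by ring] at this
  linarith

lemma w_tendsto {i j : ℕ} (hi : 0 < i) (hij : i < j) (k : ℕ) (hik : i ≤ k) :
    Tendsto (fun r : ℝ => (r ^ i - 1) ^ ((j:ℝ)/i) / (r ^ j - 1)) (𝓝[>] 1) (𝓝 0) := by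
  have hδ : (0:ℝ) < (j:ℝ)/i - 1 := by
    rw [sub_pos, lt_div_iff₀ (by exact_mod_cast hi), one_mul]
    exact_mod_cast hij
  set δ : ℝ := (j:ℝ)/i - 1 with hδdef
  set K : ℝ := (k : ℝ) * 2 ^ k with hKdef
  have hK0 : (0:ℝ) < K :=
    mul_pos (by exact_mod_cast lt_of_lt_of_le hi hik) (by positivity)
  have hj0 : (0:ℝ) < (j:ℝ) := by exact_mod_cast lt_of_le_of_lt (Nat.zero_le i) hij
  have hbound : ∀ᶠ r in 𝓝[>] (1:ℝ), (r ^ i - 1) ^ ((j:ℝ)/i) / (r ^ j - 1)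
      ≤ K ^ ((j:ℝ)/i) * (r - 1) ^ δ := by
    filter_upwards [Ioo_mem_nhdsGT_of_mem (Set.left_mem_Ico.2 (by linarith : (1:ℝ) < 1 + 1))]
      with r hrmem
    obtain ⟨hr1, hr2⟩ := hrmem
    have hε : (0:ℝ) < r - 1 := by linarith
    have hnum : r ^ i - 1 ≤ K * (r - 1) := pow_sub_one_le_aux hr1 (by linarith) hik
    have hden : (j:ℝ) * (r - 1) ≤ r ^ j - 1 := mul_sub_one_le_pow_sub_one hr1 j
    have hnum0 : (0:ℝ) ≤ r ^ i - 1 := by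
      have : (1:ℝ) ≤ r ^ i := one_le_pow₀ hr1.le
      linarith
    have h1 : (r ^ i - 1) ^ ((j:ℝ)/i) ≤ (K * (r-1)) ^ ((j:ℝ)/i) :=
      Real.rpow_le_rpow hnum0 hnum (by positivity)
    have h2 : (r-1) ^ ((j:ℝ)/i) = (r-1) ^ δ * (r-1) := by
      rw [hδdef, Real.rpow_sub hε, Real.rpow_one]
      field_simp
    calc (r ^ i - 1) ^ ((j:ℝ)/i) / (r ^ j - 1)
        ≤ (K * (r-1)) ^ ((j:ℝ)/i) / ((j:ℝ) * (r - 1)) :=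
          div_le_div₀ (by positivity) h1 (by positivity) hden
      _ = K ^ ((j:ℝ)/i) * (r-1) ^ δ * (1/(j:ℝ)) := by
          rw [Real.mul_rpow hK0.le hε.le, h2]
          field_simp
      _ ≤ K ^ ((j:ℝ)/i) * (r-1) ^ δ * 1 := by
          apply mul_le_mul_of_nonneg_left _ (by positivity)
          rw [div_le_one hj0]
          exact_mod_cast (by omega : 1 ≤ j)
      _ = K ^ ((j:ℝ)/i) * (r - 1) ^ δ := mul_one _
  have hnn : ∀ᶠ r in 𝓝[>] (1:ℝ), 0 ≤ (r ^ i - 1) ^ ((j:ℝ)/i) / (r ^ j - 1) := by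
    filter_upwards [self_mem_nhdsWithin] with r hr
    have hr1 : (1:ℝ) < r := hr
    have h1 : (0:ℝ) ≤ r ^ i - 1 := by
      have : (1:ℝ) ≤ r ^ i := one_le_pow₀ hr1.le
      linarith
    have h2 : (0:ℝ) < r ^ j - 1 := by
      have : (1:ℝ) < r ^ j := one_lt_pow₀ hr1 (by omega)
      linarith
    positivity
  have hg : Tendsto (fun r : ℝ => K ^ ((j:ℝ)/i) * (r - 1) ^ δ) (𝓝[>] 1) (𝓝 0) := by
    have h1 : Tendsto (fun r : ℝ => r - 1) (𝓝[>] (1:ℝ)) (𝓝[>] (0:ℝ)) := by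
      apply tendsto_nhdsWithin_of_tendsto_nhds_of_eventually_within
      · have h0 : Tendsto (fun r : ℝ => r - 1) (𝓝 (1:ℝ)) (𝓝 (1 - 1 : ℝ)) :=
          tendsto_id.sub tendsto_const_nhds
        rw [sub_self] at h0
        exact h0.mono_left nhdsWithin_le_nhds
      · filter_upwards [self_mem_nhdsWithin] with r hr
        exact sub_pos.2 (show (1:ℝ) < r from hr)
    have h2 : Tendsto (fun y : ℝ => y ^ δ) (𝓝[>] (0:ℝ)) (𝓝 0) := by
      have hc : ContinuousAt (fun y : ℝ => y ^ δ) 0 :=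
        Real.continuousAt_rpow_const 0 δ (Or.inr hδ.le)
      have := hc.tendsto.mono_left (nhdsWithin_le_nhds (s := Set.Ioi (0:ℝ)))
      rwa [Real.zero_rpow (ne_of_gt hδ)] at this
    have := (h2.comp h1).const_mul (K ^ ((j:ℝ)/i))
    simpa using this
  exact squeeze_zero' hnn hbound hg

noncomputable def wAux (i j : ℕ) (r : ℝ) : ℝ := (r ^ i - 1) ^ ((j:ℝ)/(i:ℝ)) / (r ^ j - 1)

noncomputable def WAux (k j : ℕ) (r : ℝ) : ℝ :=
  wAux k j r * ∏ i ∈ Finset.Icc 1 (k-1), (1 - wAux i j r)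

lemma wAux_self {j : ℕ} (hj : 0 < j) {r : ℝ} (hr : 1 < r) : wAux j j r = 1 := by
  have h1 : (0:ℝ) < r ^ j - 1 := by
    have : (1:ℝ) < r ^ j := one_lt_pow₀ hr (by omega)
    linarith
  rw [wAux, show ((j:ℝ)/(j:ℝ)) = 1 from div_self (by exact_mod_cast hj.ne'), Real.rpow_one, div_self h1.ne']

lemma Phi_tendsto {c : ℕ → ℝ} (hc0 : c 0 = 0) {R : ℝ} (hR : 0 < R)
    (hsum : ∀ t : ℝ, |t| < R → Summable fun j : ℕ => c j * t ^ j)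
    (x : ℝ) {k : ℕ} (hk : 0 < k) :
    Tendsto (fun r : ℝ => ∑' j : ℕ, c j * x ^ j * WAux k j r) (𝓝[>] (1:ℝ))
      (𝓝 (c k * x ^ k)) := by
  classical
  set K : ℝ := (k:ℝ) * 2 ^ k with hKdef
  have hk1 : (1:ℝ) ≤ (k:ℝ) := by exact_mod_cast hk
  have hK1 : (1:ℝ) ≤ K := by
    have h2 : (1:ℝ) ≤ 2 ^ k := one_le_pow₀ (by norm_num)
    calc (1:ℝ) = 1 * 1 := (one_mul 1).symm
      _ ≤ (k:ℝ) * 2 ^ k := mul_le_mul hk1 h2 (by norm_num) (by positivity)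
  have hK0 : (0:ℝ) < K := lt_of_lt_of_le one_pos hK1
  set ρ : ℝ := min (1/2) ((R / (2 * (|x| + 1))) ^ k) with hρdef
  have hρ0 : 0 < ρ := lt_min (by norm_num) (by positivity)
  have hρh : ρ ≤ 1/2 := min_le_left _ _
  have hρ1 : ρ ≤ 1 := by linarith
  set ε0 : ℝ := ρ / K with hε0def
  have hε00 : 0 < ε0 := div_pos hρ0 hK0
  set t1 : ℝ := |x| * ρ ^ ((1:ℝ)/(k:ℝ)) with ht1def
  have ht10 : 0 ≤ t1 := by positivity
  have hρk : ρ ^ ((1:ℝ)/(k:ℝ)) ≤ R / (2 * (|x| + 1)) := by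
    have h1 : ρ ≤ (R / (2 * (|x| + 1))) ^ k := min_le_right _ _
    have h2 : ρ ^ ((1:ℝ)/(k:ℝ)) ≤ ((R / (2 * (|x| + 1))) ^ k) ^ ((1:ℝ)/(k:ℝ)) :=
      Real.rpow_le_rpow hρ0.le h1 (by positivity)
    rwa [← Real.rpow_natCast (R / (2 * (|x| + 1))) k, ← Real.rpow_mul (by positivity),
      mul_one_div, div_self (by exact_mod_cast hk.ne' : ((k:ℝ) ≠ 0)), Real.rpow_one] at h2
  have ht1R : t1 < R := by
    have h1 : t1 ≤ |x| * (R / (2 * (|x| + 1))) :=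
      mul_le_mul_of_nonneg_left hρk (abs_nonneg x)
    have h2 : |x| * (R / (2 * (|x| + 1))) < R := by
      rw [mul_div_assoc', div_lt_iff₀ (by positivity)]
      nlinarith [abs_nonneg x, hR]
    linarith
  set C3 : ℝ := (1 + K) ^ (k - 1) * K / ρ with hC3
  have hC30 : 0 < C3 := by positivity
  have hgsum : Summable (fun j : ℕ => C3 * (|c j| * t1 ^ j)) := by
    have h := abs_summable_of_radius hR hsum (t := t1) (by rwa [abs_of_nonneg ht10])
    simp_rw [abs_of_nonneg ht10] at h
    exact h.mul_left C3
  have hmain := tendsto_tsum_of_dominated_convergence (𝓕 := 𝓝[>] (1:ℝ))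
    (f := fun (r : ℝ) (j : ℕ) => c j * x ^ j * WAux k j r)
    (g := fun j : ℕ => if j = k then c k * x ^ k else 0)
    (bound := fun j : ℕ => C3 * (|c j| * t1 ^ j)) hgsum ?hab ?hbound
  case hab =>
    intro j
    show Tendsto (fun r : ℝ => c j * x ^ j * WAux k j r) (𝓝[>] (1:ℝ))
      (𝓝 (if j = k then c k * x ^ k else 0))
    rcases lt_trichotomy j k with hjk | rfl | hjk
    · rcases Nat.eq_zero_or_pos j with rfl | hj
      · simp only [if_neg (by omega : ¬ (0:ℕ) = k), hc0, zero_mul]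
        exact tendsto_const_nhds
      · rw [if_neg (by omega)]
        apply Tendsto.congr' ?_ tendsto_const_nhds
        filter_upwards [self_mem_nhdsWithin] with r hr
        have h0 : WAux k j r = 0 := by
          rw [WAux, Finset.prod_eq_zero (show j ∈ Finset.Icc 1 (k-1) by
            rw [Finset.mem_Icc]; omega) (by rw [wAux_self hj hr]; ring), mul_zero]
        rw [h0, mul_zero]
    · rw [if_pos rfl]
      have hprod : Tendsto (fun r => ∏ i ∈ Finset.Icc 1 (j-1), (1 - wAux i j r)) (𝓝[>](1:ℝ))
          (𝓝 (∏ i ∈ Finset.Icc 1 (j-1), (1:ℝ))) := by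
        apply tendsto_finset_prod
        intro i hi
        rw [Finset.mem_Icc] at hi
        have hw := w_tendsto (i := i) (j := j) (by omega) (by omega) j (by omega)
        have h1 := (tendsto_const_nhds (x := (1:ℝ)) (f := 𝓝[>](1:ℝ))).sub hw
        rw [sub_zero] at h1
        exact h1.congr (fun r => by rw [wAux])
      rw [Finset.prod_const_one] at hprod
      have h2 := hprod.const_mul (c j * x ^ j)
      rw [mul_one] at h2
      apply Tendsto.congr' ?_ h2
      filter_upwards [self_mem_nhdsWithin] with r hr
      rw [WAux, wAux_self hk hr, one_mul]
    · rw [if_neg (by omega)]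
      have hwk := w_tendsto (i := k) (j := j) hk hjk k le_rfl
      have hprod : Tendsto (fun r => ∏ i ∈ Finset.Icc 1 (k-1), (1 - wAux i j r)) (𝓝[>](1:ℝ))
          (𝓝 (∏ i ∈ Finset.Icc 1 (k-1), (1:ℝ))) := by
        apply tendsto_finset_prod
        intro i hi
        rw [Finset.mem_Icc] at hi
        have hw := w_tendsto (i := i) (j := j) (by omega) (by omega) k (by omega)
        have h1 := (tendsto_const_nhds (x := (1:ℝ)) (f := 𝓝[>](1:ℝ))).sub hw
        rw [sub_zero] at h1
        exact h1.congr (fun r => by rw [wAux])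
      rw [Finset.prod_const_one] at hprod
      have h2 : Tendsto (fun r => WAux k j r) (𝓝[>](1:ℝ)) (𝓝 (0 * 1)) := by
        apply Tendsto.mul ?_ hprod
        exact (hwk.congr (fun r => by rw [wAux]))
      rw [zero_mul] at h2
      have h3 := h2.const_mul (c j * x ^ j)
      rw [mul_zero] at h3
      exact h3
  case hbound =>
    filter_upwards [Ioo_mem_nhdsGT_of_mem (Set.left_mem_Ico.2 (by linarith : (1:ℝ) < 1 + ε0))]
      with r hrmem
    obtain ⟨hr1, hr2⟩ := hrmem
    have hε : (0:ℝ) < r - 1 := by linarith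
    have hrle2 : r ≤ 2 := by
      have hε01 : ε0 ≤ 1 := by
        rw [hε0def, div_le_one hK0]; linarith
      linarith
    have hKε0 : (0:ℝ) < K * (r-1) := by positivity
    have hKερ : K * (r-1) ≤ ρ := by
      have h := (mul_lt_mul_iff_right₀ hK0).2 (show r - 1 < ε0 by linarith)
      rw [hε0def, mul_div_cancel₀ _ hK0.ne'] at h
      linarith
    have hKε1 : K * (r-1) ≤ 1 := le_trans hKερ hρ1
    have hw_nonneg : ∀ i j : ℕ, 1 ≤ i → 1 ≤ j → 0 ≤ wAux i j r := by
      intro i j hi hj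
      rw [wAux]
      have h1 : (0:ℝ) ≤ r ^ i - 1 := by
        have : (1:ℝ) ≤ r ^ i := one_le_pow₀ hr1.le
        linarith
      have h2 : (0:ℝ) < r ^ j - 1 := by
        have : (1:ℝ) < r ^ j := one_lt_pow₀ hr1 (by omega)
        linarith
      positivity
    have hw_le : ∀ i j : ℕ, 1 ≤ i → i ≤ k → 1 ≤ j →
        wAux i j r ≤ (K * (r-1)) ^ ((j:ℝ)/(i:ℝ)) / ((j:ℝ) * (r-1)) := by
      intro i j hi hik hj
      rw [wAux]
      have h1 : (0:ℝ) ≤ r ^ i - 1 := by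
        have : (1:ℝ) ≤ r ^ i := one_le_pow₀ hr1.le
        linarith
      have hj0 : (0:ℝ) < (j:ℝ) := by exact_mod_cast hj
      apply div_le_div₀ (by positivity)
        (Real.rpow_le_rpow h1 (pow_sub_one_le_aux hr1 hrle2 hik) (by positivity))
        (by positivity) (mul_sub_one_le_pow_sub_one hr1 j)
    have hone_le : ∀ i j : ℕ, 1 ≤ i → i ≤ j → (1:ℝ) ≤ (j:ℝ)/(i:ℝ) := by
      intro i j hi hij
      rw [le_div_iff₀ (by exact_mod_cast hi : (0:ℝ) < (i:ℝ)), one_mul]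
      exact_mod_cast hij
    have hw_le_K : ∀ i j : ℕ, 1 ≤ i → i ≤ k → i ≤ j → 1 ≤ j → wAux i j r ≤ K := by
      intro i j hi hik hij hj
      have hj0 : (0:ℝ) < (j:ℝ) := by exact_mod_cast hj
      calc wAux i j r ≤ (K * (r-1)) ^ ((j:ℝ)/(i:ℝ)) / ((j:ℝ) * (r-1)) := hw_le i j hi hik hj
        _ ≤ (K * (r-1)) ^ (1:ℝ) / ((j:ℝ) * (r-1)) :=
            div_le_div₀ (by positivity)
              (Real.rpow_le_rpow_of_exponent_ge hKε0 hKε1 (hone_le i j hi hij))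
              (by positivity) le_rfl
        _ = K / (j:ℝ) := by
            rw [Real.rpow_one]
            field_simp
        _ ≤ K / 1 := div_le_div₀ hK0.le le_rfl one_pos (by exact_mod_cast hj)
        _ = K := div_one K
    have hwk_bound : ∀ j : ℕ, k ≤ j → wAux k j r ≤ K * ρ ^ ((j:ℝ)/(k:ℝ) - 1) := by
      intro j hj
      have hj1 : 1 ≤ j := le_trans hk hj
      have hj0 : (0:ℝ) < (j:ℝ) := by exact_mod_cast hj1
      have hexp0 : (0:ℝ) ≤ (j:ℝ)/(k:ℝ) - 1 := by
        rw [sub_nonneg]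
        exact hone_le k j hk hj
      calc wAux k j r ≤ (K * (r-1)) ^ ((j:ℝ)/(k:ℝ)) / ((j:ℝ) * (r-1)) :=
            hw_le k j hk le_rfl hj1
        _ ≤ (K * (r-1)) ^ ((j:ℝ)/(k:ℝ)) / (1 * (r-1)) :=
            div_le_div₀ (by positivity) le_rfl (by positivity)
              (by apply mul_le_mul_of_nonneg_right _ hε.le; exact_mod_cast hj1)
        _ = (K * (r-1)) ^ ((j:ℝ)/(k:ℝ) - 1) * (K * (r-1)) / (r - 1) := by
          rw [show (j:ℝ)/(k:ℝ) = ((j:ℝ)/(k:ℝ) - 1) + 1 by ring,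
            Real.rpow_add hKε0, Real.rpow_one, one_mul]
          ring
        _ = (K * (r-1)) ^ ((j:ℝ)/(k:ℝ) - 1) * K := by
          field_simp
        _ ≤ ρ ^ ((j:ℝ)/(k:ℝ) - 1) * K := by
          apply mul_le_mul_of_nonneg_right _ hK0.le
          exact Real.rpow_le_rpow hKε0.le hKερ hexp0
        _ = K * ρ ^ ((j:ℝ)/(k:ℝ) - 1) := mul_comm _ _
    intro j
    show ‖c j * x ^ j * WAux k j r‖ ≤ C3 * (|c j| * t1 ^ j)
    rcases Nat.lt_or_ge j k with hjk | hjk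
    · rcases Nat.eq_zero_or_pos j with rfl | hj
      · rw [hc0]
        simp only [zero_mul, norm_zero, abs_zero]
        positivity
      · have h0 : WAux k j r = 0 := by
          rw [WAux, Finset.prod_eq_zero (show j ∈ Finset.Icc 1 (k-1) by
            rw [Finset.mem_Icc]; omega) (by rw [wAux_self hj hr1]; ring), mul_zero]
        rw [h0, mul_zero, norm_zero]
        positivity
    · have hj1 : 1 ≤ j := le_trans hk hjk
      have hWb : |WAux k j r| ≤ K * ρ ^ ((j:ℝ)/(k:ℝ) - 1) * (1+K) ^ (k-1) := by
        rw [WAux, abs_mul]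
        apply mul_le_mul ?_ ?_ (abs_nonneg _) (by positivity)
        · rw [abs_of_nonneg (hw_nonneg k j hk hj1)]
          exact hwk_bound j hjk
        · rw [Finset.abs_prod]
          calc ∏ i ∈ Finset.Icc 1 (k-1), |1 - wAux i j r|
              ≤ ∏ i ∈ Finset.Icc 1 (k-1), (1 + K) := by
                apply Finset.prod_le_prod (fun i _ => abs_nonneg _)
                intro i hi
                rw [Finset.mem_Icc] at hi
                have h1 : 0 ≤ wAux i j r := hw_nonneg i j hi.1 hj1
                have h2 : wAux i j r ≤ K := hw_le_K i j hi.1 (by omega) (by omega) hj1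
                rw [abs_le]
                constructor <;> linarith
            _ = (1 + K) ^ (k-1) := by
                rw [Finset.prod_const, Nat.card_Icc]
                congr 1
      rw [Real.norm_eq_abs, abs_mul, abs_mul, abs_pow]
      calc |c j| * |x| ^ j * |WAux k j r|
          ≤ |c j| * |x| ^ j * (K * ρ ^ ((j:ℝ)/(k:ℝ) - 1) * (1+K) ^ (k-1)) :=
            mul_le_mul_of_nonneg_left hWb (by positivity)
        _ = C3 * (|c j| * t1 ^ j) := by
            rw [hC3, ht1def, mul_pow, ← Real.rpow_natCast (ρ ^ ((1:ℝ)/(k:ℝ))) j,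
              ← Real.rpow_mul hρ0.le, one_div,
              show ((k:ℝ))⁻¹ * (j:ℕ) = (j:ℝ)/(k:ℝ) by ring,
              Real.rpow_sub hρ0, Real.rpow_one]
            field_simp
  have hts : ∑' j : ℕ, (fun j : ℕ => if j = k then c k * x ^ k else 0) j = c k * x ^ k := by
    rw [tsum_ite_eq]
  rw [hts] at hmain
  exact hmain

/-- Let `c : ℕ → ℝ` with `c 0 = 0` be such that `∑_{j≥1} c_j t^j` converges for `|t| < R`
(with `R > 0`), and let `f t = exp (∑' j, c j * t ^ j)` for `|t| < R`. Then for any real `x`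
and positive integer `k`, as `r → 1⁺`, the quotient of the product of `P_f (S, r, x)` over
the subsets `S ⊆ {1, …, k}` with `k ∈ S` of odd cardinality by the product over those of
even cardinality tends to `exp (c k * x ^ k)`. -/
theorem tendsto_component_multiproduct_consolidated
    (c : ℕ → ℝ) (hc0 : c 0 = 0) (R : ℝ) (hR : 0 < R)
    (hsum : ∀ t : ℝ, |t| < R → Summable fun j : ℕ => c j * t ^ j)
    (f : ℝ → ℝ) (hf : ∀ t : ℝ, |t| < R → f t = Real.exp (∑' j : ℕ, c j * t ^ j))
    (x : ℝ) (k : ℕ) (hk : 0 < k) :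
    Tendsto
      (fun r : ℝ =>
        (∏ S ∈ (Finset.Icc 1 k).powerset.filter (fun S => k ∈ S ∧ Odd S.card),
            gmpP f S r x) /
          ∏ S ∈ (Finset.Icc 1 k).powerset.filter (fun S => k ∈ S ∧ Even S.card),
            gmpP f S r x)
      (𝓝[>] (1 : ℝ)) (𝓝 (Real.exp (c k * x ^ k))) := by
  classical
  set K : ℝ := (k:ℝ) * 2 ^ k with hKdef
  have hk1 : (1:ℝ) ≤ (k:ℝ) := by exact_mod_cast hk
  have hK1 : (1:ℝ) ≤ K := by
    have h2 : (1:ℝ) ≤ 2 ^ k := one_le_pow₀ (by norm_num)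
    calc (1:ℝ) = 1 * 1 := (one_mul 1).symm
      _ ≤ (k:ℝ) * 2 ^ k := mul_le_mul hk1 h2 (by norm_num) (by positivity)
  have hK0 : (0:ℝ) < K := lt_of_lt_of_le one_pos hK1
  set ρ : ℝ := min (1/2) ((R / (2 * (|x| + 1))) ^ k) with hρdef
  have hρ0 : 0 < ρ := lt_min (by norm_num) (by positivity)
  have hρh : ρ ≤ 1/2 := min_le_left _ _
  have hρ1 : ρ ≤ 1 := by linarith
  set ε0 : ℝ := ρ / K with hε0def
  have hε00 : 0 < ε0 := div_pos hρ0 hK0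
  set t1 : ℝ := |x| * ρ ^ ((1:ℝ)/(k:ℝ)) with ht1def
  have ht10 : 0 ≤ t1 := by positivity
  have hρk : ρ ^ ((1:ℝ)/(k:ℝ)) ≤ R / (2 * (|x| + 1)) := by
    have h1 : ρ ≤ (R / (2 * (|x| + 1))) ^ k := min_le_right _ _
    have h2 : ρ ^ ((1:ℝ)/(k:ℝ)) ≤ ((R / (2 * (|x| + 1))) ^ k) ^ ((1:ℝ)/(k:ℝ)) :=
      Real.rpow_le_rpow hρ0.le h1 (by positivity)
    rwa [← Real.rpow_natCast (R / (2 * (|x| + 1))) k, ← Real.rpow_mul (by positivity),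
      mul_one_div, div_self (by exact_mod_cast hk.ne' : ((k:ℝ) ≠ 0)), Real.rpow_one] at h2
  have ht1R : t1 < R := by
    have h1 : t1 ≤ |x| * (R / (2 * (|x| + 1))) :=
      mul_le_mul_of_nonneg_left hρk (abs_nonneg x)
    have h2 : |x| * (R / (2 * (|x| + 1))) < R := by
      rw [mul_div_assoc', div_lt_iff₀ (by positivity)]
      nlinarith [abs_nonneg x, hR]
    linarith
  have hΦ := Phi_tendsto hc0 hR hsum x hk
  have hcomp := (Real.continuous_exp.continuousAt (x := c k * x ^ k)).tendsto.comp hΦ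
  apply Tendsto.congr' ?_ hcomp
  filter_upwards [Ioo_mem_nhdsGT_of_mem (Set.left_mem_Ico.2 (by linarith : (1:ℝ) < 1 + ε0))]
    with r hrmem
  obtain ⟨hr1, hr2⟩ := hrmem
  have hε : (0:ℝ) < r - 1 := by linarith
  have hrle2 : r ≤ 2 := by
    have hε01 : ε0 ≤ 1 := by
      rw [hε0def, div_le_one hK0]; linarith
    linarith
  have hKερ : K * (r-1) ≤ ρ := by
    have h := (mul_lt_mul_iff_right₀ hK0).2 (show r - 1 < ε0 by linarith)
    rw [hε0def, mul_div_cancel₀ _ hK0.ne'] at h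
    linarith
  have hpow_pos : ∀ i : ℕ, 1 ≤ i → (0:ℝ) < r ^ i - 1 := by
    intro i hi
    have : (1:ℝ) < r ^ i := one_lt_pow₀ hr1 (by omega)
    linarith
  have hAfac : ∀ i ∈ Finset.Icc 1 k, (0:ℝ) < (r ^ i - 1) ^ ((1:ℝ)/(i:ℝ)) ∧
      (r ^ i - 1) ^ ((1:ℝ)/(i:ℝ)) ≤ 1 := by
    intro i hi
    rw [Finset.mem_Icc] at hi
    refine ⟨Real.rpow_pos_of_pos (hpow_pos i hi.1) _, ?_⟩
    apply Real.rpow_le_one (hpow_pos i hi.1).le ?_ (by positivity)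
    calc r ^ i - 1 ≤ K * (r-1) := pow_sub_one_le_aux hr1 hrle2 hi.2
      _ ≤ ρ := hKερ
      _ ≤ 1 := hρ1
  have hAk : (r ^ k - 1) ^ ((1:ℝ)/(k:ℝ)) ≤ ρ ^ ((1:ℝ)/(k:ℝ)) :=
    Real.rpow_le_rpow (hpow_pos k hk).le
      (le_trans (pow_sub_one_le_aux hr1 hrle2 le_rfl) hKερ) (by positivity)
  have hAS : ∀ S : Finset ℕ, S ⊆ Finset.Icc 1 k → k ∈ S →
      |(∏ i ∈ S, (r ^ i - 1) ^ ((1:ℝ)/(i:ℝ))) * x| < R := by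
    intro S hsub hkS
    have hpos : 0 < ∏ i ∈ S, (r ^ i - 1) ^ ((1:ℝ)/(i:ℝ)) :=
      Finset.prod_pos (fun i hi => (hAfac i (hsub hi)).1)
    have hle : (∏ i ∈ S, (r ^ i - 1) ^ ((1:ℝ)/(i:ℝ))) ≤ ρ ^ ((1:ℝ)/(k:ℝ)) := by
      rw [← Finset.mul_prod_erase S _ hkS]
      have hrest : (∏ i ∈ S.erase k, (r ^ i - 1) ^ ((1:ℝ)/(i:ℝ))) ≤ 1 :=
        Finset.prod_le_one
          (fun i hi => ((hAfac i (hsub (Finset.mem_of_mem_erase hi))).1).le)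
          (fun i hi => (hAfac i (hsub (Finset.mem_of_mem_erase hi))).2)
      have hrest0 : (0:ℝ) ≤ ∏ i ∈ S.erase k, (r ^ i - 1) ^ ((1:ℝ)/(i:ℝ)) :=
        Finset.prod_nonneg
          (fun i hi => ((hAfac i (hsub (Finset.mem_of_mem_erase hi))).1).le)
      calc (r ^ k - 1) ^ ((1:ℝ)/(k:ℝ)) * ∏ i ∈ S.erase k, (r ^ i - 1) ^ ((1:ℝ)/(i:ℝ))
          ≤ ρ ^ ((1:ℝ)/(k:ℝ)) * 1 := mul_le_mul hAk hrest hrest0 (by positivity)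
        _ = ρ ^ ((1:ℝ)/(k:ℝ)) := mul_one _
    rw [abs_mul, abs_of_pos hpos]
    calc (∏ i ∈ S, (r ^ i - 1) ^ ((1:ℝ)/(i:ℝ))) * |x| ≤ ρ ^ ((1:ℝ)/(k:ℝ)) * |x| :=
          mul_le_mul_of_nonneg_right hle (abs_nonneg x)
      _ = t1 := by rw [ht1def]; ring
      _ < R := ht1R
  set F : Finset (Finset ℕ) := (Finset.Icc 1 k).powerset.filter (fun S => k ∈ S) with hFdef
  have hmemF : ∀ S ∈ F, S ⊆ Finset.Icc 1 k ∧ k ∈ S := by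
    intro S hS
    rw [hFdef, Finset.mem_filter, Finset.mem_powerset] at hS
    exact hS
  set L : Finset ℕ → ℝ := fun S => ∑' j : ℕ,
    c j * ((∏ i ∈ S, (r ^ i - 1) ^ ((1:ℝ)/(i:ℝ))) * x) ^ j / (r ^ j - 1) ^ S.card with hLdef
  have hgm : ∀ S ∈ F, gmpP f S r x = Real.exp (L S) := by
    intro S hS
    obtain ⟨hsub, hkS⟩ := hmemF S hS
    exact gmpP_eq hc0 hR hsum hf x hr1 ⟨k, hkS⟩ (hAS S hsub hkS)
  have hperj : ∀ S ∈ F, ∀ j : ℕ,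
      c j * ((∏ i ∈ S, (r ^ i - 1) ^ ((1:ℝ)/(i:ℝ))) * x) ^ j / (r ^ j - 1) ^ S.card
      = c j * x ^ j * ∏ i ∈ S, wAux i j r := by
    intro S hS j
    obtain ⟨hsub, hkS⟩ := hmemF S hS
    rcases Nat.eq_zero_or_pos j with rfl | hj
    · rw [hc0]; ring
    · have h1 : ((∏ i ∈ S, (r ^ i - 1) ^ ((1:ℝ)/(i:ℝ)))) ^ j
          = ∏ i ∈ S, (r ^ i - 1) ^ ((j:ℝ)/(i:ℝ)) := by
        rw [← Finset.prod_pow]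
        apply Finset.prod_congr rfl
        intro i hi
        have hi1 : 1 ≤ i := (Finset.mem_Icc.1 (hsub hi)).1
        have hbase : (0:ℝ) ≤ r ^ i - 1 := (hpow_pos i hi1).le
        rw [← Real.rpow_natCast ((r ^ i - 1) ^ ((1:ℝ)/(i:ℝ))) j, ← Real.rpow_mul hbase]
        congr 1
        ring
      have h3 : (∏ i ∈ S, wAux i j r)
          = (∏ i ∈ S, (r ^ i - 1) ^ ((j:ℝ)/(i:ℝ))) / ∏ i ∈ S, (r ^ j - 1) := by
        simp only [wAux]
        rw [Finset.prod_div_distrib]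
      rw [mul_pow, h1, h3, Finset.prod_const]
      ring
  have hsumL : ∀ S ∈ F, Summable (fun j : ℕ =>
      c j * ((∏ i ∈ S, (r ^ i - 1) ^ ((1:ℝ)/(i:ℝ))) * x) ^ j / (r ^ j - 1) ^ S.card) := by
    intro S hS
    obtain ⟨hsub, hkS⟩ := hmemF S hS
    have habs := abs_summable_of_radius hR hsum (hAS S hsub hkS)
    apply Summable.of_abs
    apply Summable.of_nonneg_of_le (fun j => abs_nonneg _) ?_
      (habs.mul_right ((r-1) ^ S.card)⁻¹)
    intro j
    rcases Nat.eq_zero_or_pos j with rfl | hj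
    · rw [hc0]
      simp only [zero_mul, zero_div, abs_zero]
      positivity
    · rw [abs_div, abs_mul, abs_pow]
      have hd0 : (0:ℝ) < (r ^ j - 1) ^ S.card := pow_pos (hpow_pos j hj) _
      rw [abs_of_pos hd0, div_eq_mul_inv]
      apply mul_le_mul_of_nonneg_left ?_ (by positivity)
      apply inv_anti₀ (by positivity)
      apply pow_le_pow_left₀ (by linarith : (0:ℝ) ≤ r - 1) ?_
      have h5 := mul_sub_one_le_pow_sub_one hr1 j
      have hj1 : (1:ℝ) ≤ (j:ℝ) := by exact_mod_cast hj
      nlinarith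
  have hsum2 : ∀ S ∈ F, Summable (fun j : ℕ => c j * x ^ j * ∏ i ∈ S, wAux i j r) :=
    fun S hS => (hsumL S hS).congr (hperj S hS)
  -- rewrite the goal
  have hodd : (Finset.Icc 1 k).powerset.filter (fun S => k ∈ S ∧ Odd S.card)
      = F.filter (fun S => Odd S.card) := by
    rw [hFdef, Finset.filter_filter]
  have heven : (Finset.Icc 1 k).powerset.filter (fun S => k ∈ S ∧ Even S.card)
      = F.filter (fun S => Even S.card) := by
    rw [hFdef, Finset.filter_filter]
  rw [hodd, heven,
    show (∏ S ∈ F.filter (fun S => Odd S.card), gmpP f S r x)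
      = ∏ S ∈ F.filter (fun S => Odd S.card), Real.exp (L S) from
      Finset.prod_congr rfl (fun S hS => hgm S (Finset.mem_of_mem_filter S hS)),
    show (∏ S ∈ F.filter (fun S => Even S.card), gmpP f S r x)
      = ∏ S ∈ F.filter (fun S => Even S.card), Real.exp (L S) from
      Finset.prod_congr rfl (fun S hS => hgm S (Finset.mem_of_mem_filter S hS)),
    ← Real.exp_sum, ← Real.exp_sum, ← Real.exp_sub]
  show Real.exp (∑' j : ℕ, c j * x ^ j * WAux k j r) = _
  congr 1
  have hsplit : ∑ S ∈ F.filter (fun S => Odd S.card), L S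
      - ∑ S ∈ F.filter (fun S => Even S.card), L S
      = ∑ S ∈ F, (if Even S.card then (-1:ℝ) else 1) * L S := by
    have h1 : ∑ S ∈ F.filter (fun S => Even S.card),
        (if Even S.card then (-1:ℝ) else 1) * L S
        = - ∑ S ∈ F.filter (fun S => Even S.card), L S := by
      rw [← Finset.sum_neg_distrib]
      apply Finset.sum_congr rfl
      intro S hS
      rw [if_pos (Finset.mem_filter.1 hS).2]
      ring
    have h2 : ∑ S ∈ F.filter (fun S => ¬ Even S.card),
        (if Even S.card then (-1:ℝ) else 1) * L S
        = ∑ S ∈ F.filter (fun S => Odd S.card), L S := by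
      rw [show F.filter (fun S => ¬ Even S.card) = F.filter (fun S => Odd S.card) from
        Finset.filter_congr (fun S _ => by rw [Nat.not_even_iff_odd])]
      apply Finset.sum_congr rfl
      intro S hS
      rw [if_neg (Nat.not_even_iff_odd.2 (Finset.mem_filter.1 hS).2), one_mul]
    rw [← Finset.sum_filter_add_sum_filter_not F (fun S => Even S.card)
      (fun S => (if Even S.card then (-1:ℝ) else 1) * L S), h1, h2]
    ring
  have hLS : ∀ S ∈ F, (if Even S.card then (-1:ℝ) else 1) * L S
      = ∑' j : ℕ, (if Even S.card then (-1:ℝ) else 1)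
          * (c j * x ^ j * ∏ i ∈ S, wAux i j r) := by
    intro S hS
    rw [tsum_mul_left]
    congr 1
    rw [hLdef]
    exact tsum_congr (hperj S hS)
  have hswap : ∑ S ∈ F, (if Even S.card then (-1:ℝ) else 1) * L S
      = ∑' j : ℕ, ∑ S ∈ F, (if Even S.card then (-1:ℝ) else 1)
          * (c j * x ^ j * ∏ i ∈ S, wAux i j r) := by
    rw [Finset.sum_congr rfl hLS]
    exact (Summable.tsum_finsetSum (fun S hS => ((hsum2 S hS).mul_left _))).symm
  have hcomb : ∀ j : ℕ, ∑ S ∈ F, (if Even S.card then (-1:ℝ) else 1)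
      * (c j * x ^ j * ∏ i ∈ S, wAux i j r)
      = c j * x ^ j * WAux k j r := by
    intro j
    rw [WAux, ← alt_sum k hk (fun i => wAux i j r), hFdef, Finset.mul_sum]
    apply Finset.sum_congr rfl
    intro S hS
    ring
  rw [hsplit, hswap]
  exact tsum_congr (fun j => (hcomb j).symm)
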